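/- Let f : ℕ → ℝ and let B, K be positive integers. Suppose that f(a) ∈ ℤ for all integers a ≥ B, and that for every integer a ≥ B and every integer n with K·a ≤ n ≤ K·(a+1), one has Δ^{n−a}(Δ−1)^{a} f(a) = 0. Then there exist polynomials P₁, P₂ with rational coefficients such that f(a) = P₁(a) + P₂(a)·2^a for all integers a ≥ B. -/

import Mathlib

/-- Forward difference operator on functions `ℕ → ℝ`: `Δ f a = f (a+1) - f a`. -/
noncomputable def fwdD (f : ℕ → ℝ) : ℕ → ℝ := fun a => f (a + 1) - f a

/-- The operator `Δ - 1` on functions `ℕ → ℝ`: `(Δ-1) f a = f (a+1) - 2 f a`. -/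
noncomputable def fwdDOne (f : ℕ → ℝ) : ℕ → ℝ := fun a => f (a + 1) - 2 * f a

open Polynomial Finset

lemma aux_fwdD_eq : fwdD = fwdDiff 1 := rfl

lemma aux_comm1 : Function.Commute fwdD fwdDOne := by
  intro g; funext x; simp [fwdD, fwdDOne]; ring

lemma aux_fwdD_iter_succ (g : ℕ → ℝ) (m x : ℕ) :
    fwdD^[m] g (x + 1) = fwdD^[m + 1] g x + fwdD^[m] g x := by
  rw [Function.iterate_succ_apply']
  simp [fwdD]

lemma aux_v_rec (f : ℕ → ℝ) (a m : ℕ) :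
    fwdD^[m] (fwdDOne^[a + 1] f) (a + 1)
      = fwdD^[m + 2] (fwdDOne^[a] f) a - fwdD^[m] (fwdDOne^[a] f) a := by
  set g := fwdDOne^[a] f with hg
  rw [Function.iterate_succ_apply' fwdDOne a f, ← hg]
  rw [(aux_comm1.iterate_left m) g]
  show fwdD^[m] g (a + 1 + 1) - 2 * fwdD^[m] g (a + 1) = _
  rw [aux_fwdD_iter_succ g m (a+1), aux_fwdD_iter_succ g (m+1) a, aux_fwdD_iter_succ g m a]
  ring

lemma aux_vanish (f : ℕ → ℝ) (B K : ℕ) (hK : 1 ≤ K)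
    (h : ∀ a : ℕ, B ≤ a → ∀ n : ℕ, K * a ≤ n → n ≤ K * (a + 1) →
      fwdD^[n - a] (fwdDOne^[a] f) a = 0) :
    ∀ t a m : ℕ, B ≤ a → K * a ≤ m + a → m + a ≤ K * a + K + t →
      fwdD^[m] (fwdDOne^[a] f) a = 0 := by
  intro t
  induction t with
  | zero =>
    intro a m ha h1 h2
    have := h a ha (m + a) h1 (by rw [mul_add, mul_one]; omega)
    simpa using this
  | succ t IH =>
    intro a m ha h1 h2
    rcases le_or_gt (m + a) (K * a + K + t) with h3 | h3
    · exact IH a m ha h1 h3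
    · have hm : m + a = K * a + K + t + 1 := by omega
      have hm2 : 2 ≤ m := by nlinarith [Nat.one_le_iff_ne_zero.mp hK, Nat.le_mul_of_pos_left a hK]
      obtain ⟨m', rfl⟩ : ∃ m', m = m' + 2 := ⟨m - 2, by omega⟩
      have e1 : fwdD^[m'] (fwdDOne^[a] f) a = 0 := by
        apply IH a m' ha <;> nlinarith [Nat.le_mul_of_pos_left a hK]
      have e2 : fwdD^[m'] (fwdDOne^[a + 1] f) (a + 1) = 0 := by
        apply IH (a + 1) m' (le_trans ha (Nat.le_succ a)) <;> nlinarith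
      have := aux_v_rec f a m'
      rw [e2, e1] at this
      linarith [this]

lemma aux_surjL_aux : ∀ n : ℕ, ∀ Q : Polynomial ℚ, Q.natDegree ≤ n →
    ∃ p : Polynomial ℚ, p.comp (X + 1) - 2 * p = Q := by
  intro n
  induction n with
  | zero =>
    intro Q hQ
    refine ⟨-Q, ?_⟩
    rw [Polynomial.eq_C_of_natDegree_le_zero hQ]
    simp
    ring
  | succ n IH =>
    intro Q hQ
    set c := Q.coeff (n + 1) with hc
    set Q' : Polynomial ℚ := Q + C c * (X + 1) ^ (n + 1) - 2 * C c * X ^ (n + 1) with hQ'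
    have hdeg : Q'.natDegree ≤ n := by
      rw [Polynomial.natDegree_le_iff_coeff_eq_zero]
      intro m hm
      rw [hQ']
      simp only [coeff_sub, coeff_add, coeff_C_mul, coeff_X_add_one_pow, mul_assoc,
        coeff_X_pow]
      rcases eq_or_lt_of_le (Nat.succ_le_of_lt hm) with h1 | h1
      · rw [← h1]
        simp [← hc]
        ring
      · have : Q.coeff m = 0 := Polynomial.coeff_eq_zero_of_natDegree_lt (lt_of_le_of_lt hQ h1)
        rw [this, Nat.choose_eq_zero_of_lt h1]
        simp [Nat.ne_of_gt h1]
    obtain ⟨p', hp'⟩ := IH Q' hdeg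
    refine ⟨p' - C c * X ^ (n + 1), ?_⟩
    rw [Polynomial.sub_comp, Polynomial.mul_comp, Polynomial.C_comp, Polynomial.pow_comp,
      Polynomial.X_comp]
    rw [hQ'] at hp'
    linear_combination hp'

lemma aux_surjL (Q : Polynomial ℚ) : ∃ p : Polynomial ℚ, p.comp (X + 1) - 2 * p = Q :=
  aux_surjL_aux Q.natDegree Q le_rfl

lemma aux_surjD_aux : ∀ n : ℕ, ∀ Q : Polynomial ℚ, Q.natDegree ≤ n →
    ∃ p : Polynomial ℚ, p.comp (X + 1) - p = Q := by
  intro n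
  induction n with
  | zero =>
    intro Q hQ
    refine ⟨C (Q.coeff 0) * X, ?_⟩
    rw [Polynomial.eq_C_of_natDegree_le_zero hQ]
    simp [Polynomial.mul_comp]
    ring
  | succ n IH =>
    intro Q hQ
    set c := Q.coeff (n + 1) with hc
    set Q' : Polynomial ℚ := Q - C (c / (n + 2)) * ((X + 1) ^ (n + 2) - X ^ (n + 2)) with hQ'
    have hdeg : Q'.natDegree ≤ n := by
      rw [Polynomial.natDegree_le_iff_coeff_eq_zero]
      intro m hm
      have hn2 : ((n : ℚ) + 2) ≠ 0 := by positivity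
      rw [hQ']
      simp only [coeff_sub, coeff_C_mul, coeff_X_add_one_pow, coeff_X_pow]
      rcases eq_or_lt_of_le (Nat.succ_le_of_lt hm) with h1 | h1
      · rw [← h1]
        have : ((n + 2).choose (n + 1) : ℚ) = (n : ℚ) + 2 := by
          rw [Nat.choose_succ_self_right]
          push_cast; ring
        simp only [← hc, this, if_neg (by omega : ¬ (n + 1 : ℕ) = n + 2)]
        field_simp
        ring
      · have hQm : Q.coeff m = 0 := Polynomial.coeff_eq_zero_of_natDegree_lt (lt_of_le_of_lt hQ h1)
        rcases eq_or_lt_of_le (Nat.succ_le_of_lt h1) with h2 | h2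
        · rw [hQm, ← h2]
          simp
        · rw [hQm, Nat.choose_eq_zero_of_lt h2, if_neg (by omega : ¬ m = n + 2)]
          simp
    obtain ⟨p', hp'⟩ := IH Q' hdeg
    refine ⟨p' + C (c / (n + 2)) * X ^ (n + 2), ?_⟩
    rw [Polynomial.add_comp, Polynomial.mul_comp, Polynomial.C_comp, Polynomial.pow_comp,
      Polynomial.X_comp]
    rw [hQ'] at hp'
    linear_combination hp'

lemma aux_surjD (Q : Polynomial ℚ) : ∃ p : Polynomial ℚ, p.comp (X + 1) - p = Q :=
  aux_surjD_aux Q.natDegree Q le_rfl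

lemma aux_step (h : ℕ → ℝ) (B : ℕ)
    (hrat : ∀ x, B ≤ x → ∃ q : ℚ, h x = (q : ℝ))
    (Q₁ Q₂ : Polynomial ℚ)
    (hQ : ∀ a : ℕ, B ≤ a → h (a + 1) - 2 * h a
        = ((Q₁.eval (a : ℚ) : ℚ) : ℝ) + ((Q₂.eval (a : ℚ) : ℚ) : ℝ) * 2 ^ a) :
    ∃ P₁ P₂ : Polynomial ℚ, ∀ a : ℕ, B ≤ a →
      h a = ((P₁.eval (a : ℚ) : ℚ) : ℝ) + ((P₂.eval (a : ℚ) : ℚ) : ℝ) * 2 ^ a := by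
  obtain ⟨R₁, hR₁⟩ := aux_surjL Q₁
  obtain ⟨R₂, hR₂⟩ := aux_surjD (Polynomial.C (1/2 : ℚ) * Q₂)
  have eR₁ : ∀ a : ℕ, R₁.eval ((a : ℚ) + 1) = 2 * R₁.eval (a : ℚ) + Q₁.eval (a : ℚ) := by
    intro a
    have := congrArg (Polynomial.eval (a : ℚ)) hR₁
    simp [Polynomial.eval_comp] at this
    linarith
  have eR₂ : ∀ a : ℕ, R₂.eval ((a : ℚ) + 1) = R₂.eval (a : ℚ) + (1/2) * Q₂.eval (a : ℚ) := by
    intro a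
    have := congrArg (Polynomial.eval (a : ℚ)) hR₂
    simp [Polynomial.eval_comp] at this
    linarith
  obtain ⟨q₀, hq₀⟩ := hrat B le_rfl
  set c : ℚ := (q₀ - R₁.eval (B : ℚ) - R₂.eval (B : ℚ) * 2 ^ B) / 2 ^ B with hcdef
  refine ⟨R₁, R₂ + C c, ?_⟩
  have key : ∀ a : ℕ, B ≤ a →
      h a = ((R₁.eval (a : ℚ) : ℚ) : ℝ) + (((R₂.eval (a : ℚ) + c : ℚ)) : ℝ) * 2 ^ a := by
    intro a ha
    induction a, ha using Nat.le_induction with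
    | base =>
      rw [hq₀]
      have h2 : (2 : ℚ) ^ B ≠ 0 := by positivity
      have : (q₀ : ℚ) = R₁.eval (B : ℚ) + (R₂.eval (B : ℚ) + c) * 2 ^ B := by
        rw [hcdef]; field_simp; ring
      rw [this]; push_cast; ring
    | succ a ha IH =>
      have hstep := hQ a ha
      have e1 := eR₁ a
      have e2 := eR₂ a
      have goalcast : ((a : ℕ) + 1 : ℚ) = (a : ℚ) + 1 := by push_cast; ring
      have hval : h (a + 1) = 2 * h a + ((Q₁.eval (a : ℚ) : ℚ) : ℝ)
          + ((Q₂.eval (a : ℚ) : ℚ) : ℝ) * 2 ^ a := by linarith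
      rw [hval, IH]
      push_cast [goalcast, e1, e2]
      ring
  intro a ha
  rw [key a ha]
  simp only [Polynomial.eval_add, Polynomial.eval_C]

lemma aux_invert : ∀ (j : ℕ) (h : ℕ → ℝ) (B : ℕ),
    (∀ x, B ≤ x → ∃ q : ℚ, h x = (q : ℝ)) →
    ∀ Q₁ Q₂ : Polynomial ℚ, (∀ a : ℕ, B ≤ a → fwdDOne^[j] h a
        = ((Q₁.eval (a : ℚ) : ℚ) : ℝ) + ((Q₂.eval (a : ℚ) : ℚ) : ℝ) * 2 ^ a) →
    ∃ P₁ P₂ : Polynomial ℚ, ∀ a : ℕ, B ≤ a →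
      h a = ((P₁.eval (a : ℚ) : ℚ) : ℝ) + ((P₂.eval (a : ℚ) : ℚ) : ℝ) * 2 ^ a := by
  intro j
  induction j with
  | zero =>
    intro h B hrat Q₁ Q₂ hQ
    exact ⟨Q₁, Q₂, fun a ha => by simpa using hQ a ha⟩
  | succ j IH =>
    intro h B hrat Q₁ Q₂ hQ
    have hrat' : ∀ x, B ≤ x → ∃ q : ℚ, fwdDOne h x = (q : ℝ) := by
      intro x hx
      obtain ⟨q1, h1⟩ := hrat (x + 1) (le_trans hx (Nat.le_succ x))
      obtain ⟨q2, h2⟩ := hrat x hx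
      exact ⟨q1 - 2 * q2, by simp [fwdDOne, h1, h2]⟩
    have hQ' : ∀ a : ℕ, B ≤ a → fwdDOne^[j] (fwdDOne h) a
        = ((Q₁.eval (a : ℚ) : ℚ) : ℝ) + ((Q₂.eval (a : ℚ) : ℚ) : ℝ) * 2 ^ a := by
      intro a ha
      rw [← Function.iterate_succ_apply]
      exact hQ a ha
    obtain ⟨P₁, P₂, hP⟩ := IH (fwdDOne h) B hrat' Q₁ Q₂ hQ'
    exact aux_step h B hrat P₁ P₂ (fun a ha => by
      have := hP a ha
      simpa [fwdDOne] using this)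

lemma aux_newton (g : ℕ → ℝ) (y x : ℕ) :
    g (y + x) = ∑ k ∈ range (x + 1), (x.choose k : ℝ) * fwdD^[k] g y := by
  have := shift_eq_sum_fwdDiff_iter 1 g x y
  simp only [smul_eq_mul, mul_one] at this
  rw [aux_fwdD_eq]
  rw [this]
  congr 1
  funext k
  rw [nsmul_eq_mul]

lemma aux_rat_fwdDOne (f : ℕ → ℝ) (B : ℕ) (hrat : ∀ x, B ≤ x → ∃ q : ℚ, f x = (q : ℝ)) :
    ∀ j x, B ≤ x → ∃ q : ℚ, fwdDOne^[j] f x = (q : ℝ) := by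
  intro j
  induction j with
  | zero => simpa using hrat
  | succ j IH =>
    intro x hx
    obtain ⟨q1, h1⟩ := IH (x + 1) (le_trans hx (Nat.le_succ x))
    obtain ⟨q2, h2⟩ := IH x hx
    refine ⟨q1 - 2 * q2, ?_⟩
    rw [Function.iterate_succ_apply']
    simp [fwdDOne, h1, h2]

lemma aux_rat_fwdD (g : ℕ → ℝ) (B : ℕ) (hrat : ∀ x, B ≤ x → ∃ q : ℚ, g x = (q : ℝ)) :
    ∀ j x, B ≤ x → ∃ q : ℚ, fwdD^[j] g x = (q : ℝ) := by
  intro j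
  induction j with
  | zero => simpa using hrat
  | succ j IH =>
    intro x hx
    obtain ⟨q1, h1⟩ := IH (x + 1) (le_trans hx (Nat.le_succ x))
    obtain ⟨q2, h2⟩ := IH x hx
    refine ⟨q1 - q2, ?_⟩
    rw [Function.iterate_succ_apply']
    simp [fwdD, h1, h2]

lemma aux_newton_poly (g : ℕ → ℝ) (B N : ℕ)
    (q : ℕ → ℚ) (hq : ∀ m, fwdD^[m] g B = (q m : ℝ))
    (hvan : ∀ m, N ≤ m → fwdD^[m] g B = 0) :
    ∃ P : Polynomial ℚ, ∀ a : ℕ, B ≤ a → g a = ((P.eval (a : ℚ) : ℚ) : ℝ) := by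
  refine ⟨∑ m ∈ range N, C (q m) *
      (((m.factorial : ℚ)⁻¹ • descPochhammer ℚ m).comp (X - C (B : ℚ))), ?_⟩
  intro a ha
  obtain ⟨x, rfl⟩ : ∃ x, a = B + x := ⟨a - B, by omega⟩
  rw [aux_newton g B x]
  have heval : (∑ m ∈ range N, C (q m) *
      (((m.factorial : ℚ)⁻¹ • descPochhammer ℚ m).comp (X - C (B : ℚ)))).eval ((B + x : ℕ) : ℚ)
      = ∑ m ∈ range N, q m * (x.choose m : ℚ) := by
    rw [Polynomial.eval_finset_sum]
    congr 1
    funext m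
    rw [Polynomial.eval_mul, Polynomial.eval_C, Polynomial.eval_comp]
    have e1 : (X - C (B : ℚ)).eval ((B + x : ℕ) : ℚ) = (x : ℚ) := by
      rw [Polynomial.eval_sub, Polynomial.eval_X, Polynomial.eval_C]; push_cast; ring
    rw [e1, Polynomial.eval_smul, smul_eq_mul, descPochhammer_eval_eq_descFactorial]
    congr 1
    rw [Nat.descFactorial_eq_factorial_mul_choose]
    push_cast
    rw [inv_mul_eq_div, mul_comm]
    rw [mul_div_assoc, div_self (by exact_mod_cast Nat.factorial_ne_zero m), mul_one]
  rw [heval]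
  push_cast
  have eL : ∑ k ∈ range (x + 1), (x.choose k : ℝ) * fwdD^[k] g B
      = ∑ k ∈ range (max N (x + 1)), (x.choose k : ℝ) * fwdD^[k] g B := by
    apply Finset.sum_subset (Finset.range_subset_range.mpr (le_max_right _ _))
    intro m _ hm
    simp only [Finset.mem_range, not_lt] at hm
    rw [Nat.choose_eq_zero_of_lt (by omega)]
    simp
  have eR : ∑ k ∈ range N, (q k : ℝ) * (x.choose k : ℝ)
      = ∑ k ∈ range (max N (x + 1)), (q k : ℝ) * (x.choose k : ℝ) := by
    apply Finset.sum_subset (Finset.range_subset_range.mpr (le_max_left _ _))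
    intro m _ hm
    simp only [Finset.mem_range, not_lt] at hm
    have hz : (q m : ℝ) = 0 := by rw [← hq m]; exact hvan m hm
    rw [hz, zero_mul]
  rw [eL, eR]
  exact Finset.sum_congr rfl fun k _ => by rw [hq k]; ring

theorem stmt1 (f : ℕ → ℝ) (B K : ℕ) (hB : 1 ≤ B) (hK : 1 ≤ K)
    (hint : ∀ a : ℕ, B ≤ a → ∃ m : ℤ, f a = (m : ℝ))
    (h : ∀ a : ℕ, B ≤ a → ∀ n : ℕ, K * a ≤ n → n ≤ K * (a + 1) →
      fwdD^[n - a] (fwdDOne^[a] f) a = 0) :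
    ∃ P₁ P₂ : Polynomial ℚ, ∀ a : ℕ, B ≤ a →
      f a = ((P₁.eval (a : ℚ) : ℚ) : ℝ) + ((P₂.eval (a : ℚ) : ℚ) : ℝ) * 2 ^ a := by
  have hratf : ∀ x, B ≤ x → ∃ q : ℚ, f x = (q : ℝ) := by
    intro x hx
    obtain ⟨m, hm⟩ := hint x hx
    exact ⟨(m : ℚ), by rw [hm]; push_cast; ring⟩
  set g := fwdDOne^[B] f with hg
  have hratg : ∀ x, B ≤ x → ∃ q : ℚ, g x = (q : ℝ) := aux_rat_fwdDOne f B hratf B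
  have hratD : ∀ m, ∃ q : ℚ, fwdD^[m] g B = (q : ℝ) :=
    fun m => aux_rat_fwdD g B hratg m B le_rfl
  choose q hq using hratD
  have hvan : ∀ m, K * B ≤ m → fwdD^[m] g B = 0 := by
    intro m hm
    have hBK : B ≤ K * B := Nat.le_mul_of_pos_left B hK
    exact aux_vanish f B K hK h m B m le_rfl (by omega) (by omega)
  obtain ⟨P, hP⟩ := aux_newton_poly g B (K * B) q hq hvan
  apply aux_invert B f B hratf P 0
  intro a ha
  rw [← hg, hP a ha]
  simp
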